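/- Let (L → M → N) be a 2-crossed module of groups with ∂₁ : L → M injective, I an index set, and let n : I × I → N, m : I × I × I → M, l : I × I × I × I → L be families satisfying n_{ij} n_{jk} = ∂₂(m_{ijk}) · n_{ik} and m_{ijk} m_{ikl} = ∂₁(l_{ijkl}) · ^{n_{ij}}m_{jkl} · m_{ijl} for all indices. Then the families l_{ijkl} automatically satisfy the 3-cocycle coherence relation: l_{ijkl} · ^{(^{n_{ij}}m_{jkl})}(l_{ijlm}) · ^{n_{ij}}l_{jklm} = ^{m_{ijk}}l_{iklm} · {m_{ijk}, ^{n_{ik}}m_{klm}} · ^{(^{n_{ij} n_{jk}}m_{klm})}(l_{ijkm}) for all i, j, k, l, m ∈ I. -/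

import Mathlib

/-- A 2-crossed module `(L → M → N)`: homomorphisms `d1 : L →* M`, `d2 : M →* N` with
`d2 ∘ d1` trivial, left actions of `N` on `L` and `M` by group automorphisms under which
`d1` and `d2` are equivariant, and an `N`-equivariant Peiffer lifting `pf : M → M → L`
satisfying axioms (ii)-(vi).  In axiom (v), `^{m}l` denotes the induced action of `M`
on `L`, `^{m}l = l * pf (d1 l)⁻¹ m`. -/
structure TwoCrossedModule (L M N : Type*) [Group L] [Group M] [Group N] where
  d1 : L →* M
  d2 : M →* N
  d2_d1 : ∀ l : L, d2 (d1 l) = 1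
  actL : N → L → L
  actM : N → M → M
  actL_one : ∀ l : L, actL 1 l = l
  actL_mul : ∀ (n₁ n₂ : N) (l : L), actL (n₁ * n₂) l = actL n₁ (actL n₂ l)
  actL_map_mul : ∀ (n : N) (l₁ l₂ : L), actL n (l₁ * l₂) = actL n l₁ * actL n l₂
  actM_one : ∀ m : M, actM 1 m = m
  actM_mul : ∀ (n₁ n₂ : N) (m : M), actM (n₁ * n₂) m = actM n₁ (actM n₂ m)
  actM_map_mul : ∀ (n : N) (m₁ m₂ : M), actM n (m₁ * m₂) = actM n m₁ * actM n m₂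
  d1_equivar : ∀ (n : N) (l : L), d1 (actL n l) = actM n (d1 l)
  d2_equivar : ∀ (n : N) (m : M), d2 (actM n m) = n * d2 m * n⁻¹
  pf : M → M → L
  pf_equivar : ∀ (n : N) (m₁ m₂ : M), actL n (pf m₁ m₂) = pf (actM n m₁) (actM n m₂)
  ax_ii : ∀ m₁ m₂ : M, m₁ * m₂ * m₁⁻¹ = d1 (pf m₁ m₂) * actM (d2 m₁) m₂
  ax_iii : ∀ l₁ l₂ : L, pf (d1 l₁) (d1 l₂) = l₁ * l₂ * l₁⁻¹ * l₂⁻¹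
  ax_iv : ∀ m₁ m₂ m₃ : M,
    pf (m₁ * m₂) m₃ = pf m₁ (m₂ * m₃ * m₂⁻¹) * actL (d2 m₁) (pf m₂ m₃)
  ax_v : ∀ m₁ m₂ m₃ : M,
    pf m₁ (m₂ * m₃) = pf m₁ m₂ * (pf m₁ m₃ * pf (d1 (pf m₁ m₃))⁻¹ (m₁ * m₂ * m₁⁻¹))
  ax_vi : ∀ (l : L) (m : M), pf (d1 l) m * pf m (d1 l) = l * actL (d2 m) l⁻¹

/-- The induced left action of `M` on `L` in a 2-crossed module: `ᵐl := l · {∂₁(l)⁻¹, m}`. -/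
def mact {L M N : Type*} [Group L] [Group M] [Group N] (T : TwoCrossedModule L M N)
    (m : M) (l : L) : L :=
  l * T.pf (T.d1 l)⁻¹ m

section Aux
variable {L M N : Type*} [Group L] [Group M] [Group N] (T : TwoCrossedModule L M N)

lemma d1_pf (m₁ m₂ : M) :
    T.d1 (T.pf m₁ m₂) = m₁ * m₂ * m₁⁻¹ * (T.actM (T.d2 m₁) m₂)⁻¹ := by
  rw [T.ax_ii m₁ m₂]; group

lemma actM_inv (nn : N) (mm : M) : T.actM nn mm⁻¹ = (T.actM nn mm)⁻¹ := by
  have h0 : T.actM nn 1 = 1 := by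
    have h := (T.actM_map_mul nn 1 1).symm
    rw [mul_one] at h
    exact mul_eq_left.mp h
  have h := T.actM_map_mul nn mm⁻¹ mm
  rw [inv_mul_cancel, h0] at h
  exact eq_inv_of_mul_eq_one_left h.symm

lemma d1_mact (mm : M) (ll : L) : T.d1 (mact T mm ll) = mm * T.d1 ll * mm⁻¹ := by
  rw [mact, map_mul, d1_pf, map_inv, T.d2_d1, inv_one, T.actM_one]
  group

end Aux

/-- in a 2-crossed module `(L → M → N)` with `∂₁` injective, families
`(n_{ij}, m_{ijk}, l_{ijkl})` satisfying the first two 3-cocycle relations automatically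
satisfy the coherence relation
`l_{ijkl} · ^{^{n_{ij}}m_{jkl}}(l_{ijlm}) · ^{n_{ij}}l_{jklm}
  = ^{m_{ijk}}l_{iklm} · {m_{ijk}, ^{n_{ik}}m_{klm}} · ^{^{n_{ij}n_{jk}}m_{klm}}(l_{ijkm})`,
where `^{m}l` is the induced `M`-action `mact`. -/


theorem statement17 {L M N : Type*} [Group L] [Group M] [Group N]
    (T : TwoCrossedModule L M N) (hinj : Function.Injective T.d1) {I : Type*}
    (n : I → I → N) (m : I → I → I → M) (l : I → I → I → I → L)
    (h1 : ∀ i j k : I, n i j * n j k = T.d2 (m i j k) * n i k)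
    (h2 : ∀ i j k p : I,
      m i j k * m i k p = T.d1 (l i j k p) * T.actM (n i j) (m j k p) * m i j p) :
    ∀ i j k p q : I,
      l i j k p * mact T (T.actM (n i j) (m j k p)) (l i j p q) *
          T.actL (n i j) (l j k p q) =
        mact T (m i j k) (l i k p q) * T.pf (m i j k) (T.actM (n i k) (m k p q)) *
          mact T (T.actM (n i j * n j k) (m k p q)) (l i j k q) := by
  intro i j k p q
  apply hinj
  have hd1 : ∀ a b c d : I, T.d1 (l a b c d) =
      m a b c * m a c d * (m a b d)⁻¹ * (T.actM (n a b) (m b c d))⁻¹ := by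
    intro a b c d
    rw [eq_mul_inv_iff_mul_eq, eq_mul_inv_iff_mul_eq]
    exact (h2 a b c d).symm
  have hE : T.actM (T.d2 (m i j k)) (T.actM (n i k) (m k p q)) =
      T.actM (n i j) (T.actM (n j k) (m k p q)) := by
    rw [← T.actM_mul, ← T.actM_mul, h1]
  simp only [map_mul, d1_mact, d1_pf, hd1, T.d1_equivar, T.actM_map_mul, map_inv,
    actM_inv, T.actM_mul, hE]
  group
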